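/- For every integer n ≥ 3, the cyclic matching sequencibility and the matching sequencibility of the cycle C_n both equal ⌊(n-1)/2⌋: cms(C_n) = ms(C_n) = ⌊(n-1)/2⌋. -/

import Mathlib

/-- Two edges of a graph (as unordered pairs of vertices) are *disjoint*
if they share no vertex. -/
def edgesDisjoint {V : Type*} (e₁ e₂ : Sym2 V) : Prop :=
  ∀ v : V, v ∈ e₁ → v ∉ e₂

/-- The number of edges of a graph `G`. -/
noncomputable def edgeCount {V : Type*} (G : SimpleGraph V) : ℕ :=
  Nat.card G.edgeSet

/-- A linear ordering `f` of the edges of `G` has matching number at least `d`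
if every `d` consecutive edges in the ordering are pairwise disjoint. -/
def LinearGood {V : Type*} (G : SimpleGraph V)
    (f : Fin (edgeCount G) ≃ G.edgeSet) (d : ℕ) : Prop :=
  ∀ j k : Fin (edgeCount G), j ≠ k → (j : ℕ) < (k : ℕ) + d → (k : ℕ) < (j : ℕ) + d →
    edgesDisjoint (f j : Sym2 V) (f k : Sym2 V)

/-- The matching sequencibility `ms G`: the largest `d` (necessarily at most the
number of edges) for which some linear ordering of the edges of `G` has every
`d` consecutive edges forming a matching. -/
noncomputable def ms {V : Type*} (G : SimpleGraph V) : ℕ :=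
  sSup {d : ℕ | d ≤ edgeCount G ∧ ∃ f : Fin (edgeCount G) ≃ G.edgeSet, LinearGood G f d}

/-- A cyclic ordering `f : ZMod N ≃ edges of G` has cyclic matching number at least `d`
if every `d` cyclically consecutive edges in the ordering are pairwise disjoint. -/
def CyclicGood {V : Type*} (G : SimpleGraph V) {N : ℕ}
    (f : ZMod N ≃ G.edgeSet) (d : ℕ) : Prop :=
  ∀ (i : ZMod N) (j k : ℕ), j < d → k < d → j ≠ k →
    edgesDisjoint (f (i + (j : ZMod N)) : Sym2 V) (f (i + (k : ZMod N)) : Sym2 V)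

/-- The cyclic matching sequencibility `cms G`: the largest `d` for which some
cyclic ordering of the edges of `G` has every `d` cyclically consecutive edges
forming a matching. -/
noncomputable def cms {V : Type*} (G : SimpleGraph V) : ℕ :=
  sSup {d : ℕ | ∃ f : ZMod (edgeCount G) ≃ G.edgeSet, CyclicGood G f d}

namespace CMS

/-- the `i`-th edge of the cycle graph -/
def edg (k : ℕ) (i : ZMod (k+3)) : Sym2 (Fin (k+3)) :=
  s((show Fin (k+3) from i), (show Fin (k+3) from (i + 1 : ZMod (k+3))))

lemma two_ne_zero' (k : ℕ) : (2 : ZMod (k+3)) ≠ 0 := by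
  have : ((2 : ℕ) : ZMod (k+3)) ≠ ((0 : ℕ) : ZMod (k+3)) := by
    rw [Ne, ZMod.natCast_eq_natCast_iff]
    intro h
    have := Nat.ModEq.eq_of_lt_of_lt h (by omega) (by omega)
    omega
  simpa using this

lemma one_ne_zero' (k : ℕ) : (1 : ZMod (k+3)) ≠ 0 := by
  have : ((1 : ℕ) : ZMod (k+3)) ≠ ((0 : ℕ) : ZMod (k+3)) := by
    rw [Ne, ZMod.natCast_eq_natCast_iff]
    intro h
    have := Nat.ModEq.eq_of_lt_of_lt h (by omega) (by omega)
    omega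
  simpa using this

lemma adj_iff (k : ℕ) (a b : ZMod (k+3)) :
    (SimpleGraph.cycleGraph (k+3)).Adj (show Fin (k+3) from a) (show Fin (k+3) from b) ↔
      a = b + 1 ∨ b = a + 1 := by
  have h := @SimpleGraph.cycleGraph_adj (k+1) (show Fin (k+3) from a) (show Fin (k+3) from b)
  rw [h]
  constructor
  · rintro (h1 | h1)
    · left
      have : a - b = 1 := h1
      linear_combination this
    · right
      have : b - a = 1 := h1
      linear_combination this
  · rintro (h1 | h1)
    · left
      show a - b = 1
      linear_combination h1
    · right
      show b - a = 1
      linear_combination h1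

lemma edg_mem (k : ℕ) (i : ZMod (k+3)) : edg k i ∈ (SimpleGraph.cycleGraph (k+3)).edgeSet := by
  rw [edg, SimpleGraph.mem_edgeSet, adj_iff]
  right; rfl



lemma edg_inj (k : ℕ) : Function.Injective (edg k) := by
  intro a b h
  rw [edg, edg, Sym2.eq_iff] at h
  rcases h with ⟨h1, h2⟩ | ⟨h1, h2⟩
  · exact h1
  · -- a = b + 1 and a + 1 = b  (as Fin, defeq ZMod)
    have ha : a = b + 1 := h1
    have hb : (a + 1 : ZMod (k+3)) = b := h2
    exfalso
    apply two_ne_zero' k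
    linear_combination hb - ha

lemma edg_surj (k : ℕ) (e : Sym2 (Fin (k+3)))
    (he : e ∈ (SimpleGraph.cycleGraph (k+3)).edgeSet) : ∃ i, edg k i = e := by
  induction e with
  | _ u v =>
    rw [SimpleGraph.mem_edgeSet] at he
    have := (adj_iff k u v).mp he
    rcases this with h | h
    · exact ⟨v, by unfold edg; rw [h, Sym2.eq_swap]⟩
    · exact ⟨u, by unfold edg; rw [h]⟩

/-- the edges of the cycle graph, enumerated by `ZMod (k+3)`. -/
noncomputable def E (k : ℕ) : ZMod (k+3) ≃ (SimpleGraph.cycleGraph (k+3)).edgeSet :=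
  Equiv.ofBijective (fun i => ⟨edg k i, edg_mem k i⟩)
    ⟨fun a b h => edg_inj k (by simpa using congrArg Subtype.val h),
     fun e => by obtain ⟨i, hi⟩ := edg_surj k e.1 e.2; exact ⟨i, Subtype.ext hi⟩⟩

lemma E_apply (k : ℕ) (i : ZMod (k+3)) : ((E k i : (SimpleGraph.cycleGraph (k+3)).edgeSet) : Sym2 (Fin (k+3))) = edg k i := rfl

lemma edgeCount_cycle (k : ℕ) : edgeCount (SimpleGraph.cycleGraph (k+3)) = k + 3 := by
  rw [edgeCount, Nat.card_congr (E k).symm, Nat.card_zmod]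

lemma edgesDisjoint_symm {V : Type*} {e₁ e₂ : Sym2 V} (h : edgesDisjoint e₁ e₂) :
    edgesDisjoint e₂ e₁ := fun v hv hv' => h v hv' hv

lemma edg_disjoint_iff (k : ℕ) (a b : ZMod (k+3)) :
    edgesDisjoint (edg k a) (edg k b) ↔ a ≠ b ∧ a ≠ b + 1 ∧ b ≠ a + 1 := by
  constructor
  · intro h
    refine ⟨?_, ?_, ?_⟩
    · intro hab
      exact h (show Fin (k+3) from a) (by rw [edg]; exact Sym2.mem_mk_left _ _)
        (by rw [edg, hab]; exact Sym2.mem_mk_left _ _)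
    · intro hab
      exact h (show Fin (k+3) from a) (by rw [edg]; exact Sym2.mem_mk_left _ _)
        (by rw [edg]; exact (by rw [hab]; exact Sym2.mem_mk_right _ _))
    · intro hab
      exact h (show Fin (k+3) from (a + 1 : ZMod (k+3))) (by rw [edg]; exact Sym2.mem_mk_right _ _)
        (by rw [edg]; exact (by rw [← hab]; exact Sym2.mem_mk_left _ _))
  · rintro ⟨h1, h2, h3⟩ v hv hv'
    rw [edg, Sym2.mem_iff] at hv hv'
    have hv2 : (show ZMod (k+3) from v) = a ∨ (show ZMod (k+3) from v) = a + 1 := hv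
    have hv2' : (show ZMod (k+3) from v) = b ∨ (show ZMod (k+3) from v) = b + 1 := hv'
    rcases hv2 with h | h <;> rcases hv2' with h' | h'
    · exact h1 (h.symm.trans h')
    · exact h2 (h.symm.trans h')
    · exact h3 (h'.symm.trans h)
    · exact h1 (by have := h.symm.trans h'; linear_combination this)



/-! ### helper cast lemmas -/

lemma nat_cast_inj {n a b : ℕ} (ha : a < n) (hb : b < n) (h : (a : ZMod n) = b) : a = b := by
  rw [ZMod.natCast_eq_natCast_iff] at h
  exact Nat.ModEq.eq_of_lt_of_lt h ha hb

lemma nat_cast_ne_zero {n a : ℕ} (h0 : a ≠ 0) (ha : a < n) : (a : ZMod n) ≠ 0 := by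
  intro h
  rw [ZMod.natCast_eq_zero_iff] at h
  exact absurd (Nat.le_of_dvd (by omega) h) (by omega)

/-! ### odd construction -/

lemma constr_odd (n M : ℕ) (hn : n = 2*M+3) :
    ∃ σ : ZMod n ≃ ZMod n, ∀ (q : ZMod n) (t : ℕ), 0 < t → t < M+1 →
      σ (q + (t : ZMod n)) ≠ σ q ∧ σ (q + (t : ZMod n)) ≠ σ q + 1 ∧
        σ q ≠ σ (q + (t : ZMod n)) + 1 := by
  subst hn
  have hcop : Nat.Coprime 2 (2*M+3) := Nat.coprime_two_left.mpr ⟨M+1, by ring⟩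
  set u : (ZMod (2*M+3))ˣ := ZMod.unitOfCoprime 2 hcop with hu
  have hu2 : (u : ZMod (2*M+3)) = 2 := by
    rw [hu, ZMod.coe_unitOfCoprime]; push_cast; ring
  refine ⟨Units.mulLeft u, ?_⟩
  intro q t ht htM
  have key : ∀ x : ZMod (2*M+3), Units.mulLeft u x = 2 * x := by
    intro x; rw [Units.mulLeft]; simp [hu2]
  have h2t : ((2*t : ℕ) : ZMod (2*M+3)) ≠ 0 := nat_cast_ne_zero (by omega) (by omega)
  have h2t1 : ((2*t : ℕ) : ZMod (2*M+3)) ≠ 1 := by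
    intro h
    have := nat_cast_inj (n := 2*M+3) (a := 2*t) (b := 1) (by omega) (by omega) (by exact_mod_cast h)
    omega
  have h2t2 : ((2*t+1 : ℕ) : ZMod (2*M+3)) ≠ 0 := nat_cast_ne_zero (by omega) (by omega)
  refine ⟨?_, ?_, ?_⟩
  · intro h
    rw [key, key] at h
    exact h2t (by push_cast; linear_combination h)
  · intro h
    rw [key, key] at h
    exact h2t1 (by push_cast; linear_combination h)
  · intro h
    rw [key, key] at h
    exact h2t2 (by push_cast; linear_combination -h)

/-! ### even construction -/

def pif (M i : ℕ) : ℕ :=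
  if i < M + 2 then (M+1)*i else (M+1)*(M+1) + (M+2) + (M+3)*(i - (M+2))

lemma hzM (M : ℕ) : ((M : ZMod (M+2)) + 2) = 0 := by
  have := ZMod.natCast_self (M+2)
  push_cast at this
  linear_combination this

lemma pif_cast_mod (M a b : ℕ) (h : ((a : ℕ) : ZMod (2*M+4)) = (b : ℕ)) :
    ((a : ℕ) : ZMod (M+2)) = (b : ℕ) := by
  rw [ZMod.natCast_eq_natCast_iff] at h ⊢
  exact Nat.ModEq.of_dvd ⟨2, by ring⟩ h

lemma pif_inj_mixed (M i i' : ℕ) (hi : i < M+2) (hi' : ¬ i' < M+2) (hi'2 : i' < 2*M+4)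
    (h : ((pif M i : ℕ) : ZMod (2*M+4)) = ((pif M i' : ℕ) : ZMod (2*M+4))) : False := by
  obtain ⟨j, rfl⟩ : ∃ j, i' = M+2+j := ⟨i' - (M+2), by omega⟩
  have hj : j < M + 2 := by omega
  rw [pif, pif, if_pos hi, if_neg hi'] at h
  simp only [Nat.add_sub_cancel_left] at h
  have h2 := pif_cast_mod M _ _ h
  have hz := hzM M
  have hij : ((i + j + 1 : ℕ) : ZMod (M+2)) = 0 := by
    push_cast
    push_cast at h2
    linear_combination (-1 : ZMod (M+2))*h2 + ((i:ZMod (M+2)) - (j:ZMod (M+2)) - (M:ZMod (M+2)) - 1)*hz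
  rw [ZMod.natCast_eq_zero_iff] at hij
  have hijm : i + j + 1 = M + 2 := Nat.eq_of_dvd_of_lt_two_mul (by omega) hij (by omega)
  -- now derive contradiction in ZMod (2M+4)
  have hz2 : ((2*M+4 : ℕ) : ZMod (2*M+4)) = 0 := ZMod.natCast_self _
  have hij2 : ((i : ZMod (2*M+4)) + j + 1) = (M : ZMod (2*M+4)) + 2 := by
    have := congrArg (fun x : ℕ => (x : ZMod (2*M+4))) hijm
    push_cast at this
    linear_combination this
  push_cast at h hz2
  have hM2 : ((M+2 : ℕ) : ZMod (2*M+4)) = 0 := by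
    push_cast
    linear_combination (-1 : ZMod (2*M+4))*h - ((M:ZMod (2*M+4))+3)*hij2 + ((i:ZMod (2*M+4)) - (M:ZMod (2*M+4)) - 1)*hz2
  exact nat_cast_ne_zero (by omega) (by omega) hM2

lemma pif_inj (M i i' : ℕ) (hi : i < 2*M+4) (hi' : i' < 2*M+4)
    (h : ((pif M i : ℕ) : ZMod (2*M+4)) = ((pif M i' : ℕ) : ZMod (2*M+4))) : i = i' := by
  have hz := hzM M
  by_cases c : i < M+2 <;> by_cases c' : i' < M+2
  · have h2 := pif_cast_mod M _ _ h
    rw [pif, pif, if_pos c, if_pos c'] at h2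
    have hii : (i : ZMod (M+2)) = (i' : ZMod (M+2)) := by
      push_cast at h2
      linear_combination (-1 : ZMod (M+2)) * h2 + ((i:ZMod (M+2)) - (i':ZMod (M+2)))*hz
    exact nat_cast_inj c c' hii
  · exact absurd (pif_inj_mixed M i i' c c' hi' h) (fun x => x)
  · exact absurd (pif_inj_mixed M i' i c' c hi h.symm) (fun x => x)
  · obtain ⟨j, rfl⟩ : ∃ j, i = M+2+j := ⟨i - (M+2), by omega⟩
    obtain ⟨j', rfl⟩ : ∃ j', i' = M+2+j' := ⟨i' - (M+2), by omega⟩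
    have h2 := pif_cast_mod M _ _ h
    rw [pif, pif, if_neg c, if_neg c'] at h2
    simp only [Nat.add_sub_cancel_left] at h2
    have hjj : (j : ZMod (M+2)) = (j' : ZMod (M+2)) := by
      push_cast at h2
      linear_combination h2 - ((j:ZMod (M+2)) - (j':ZMod (M+2)))*hz
    have := nat_cast_inj (n := M+2) (by omega) (by omega) hjj
    omega

def PiFun (M : ℕ) : ZMod (2*M+4) → ZMod (2*M+4) := fun e => ((pif M e.val : ℕ) : ZMod (2*M+4))

lemma PiFun_inj (M : ℕ) : Function.Injective (PiFun M) := by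
  haveI : NeZero (2*M+4) := ⟨by omega⟩
  intro e e' h
  apply ZMod.val_injective
  exact pif_inj M e.val e'.val (ZMod.val_lt e) (ZMod.val_lt e') h

noncomputable def PiEquiv (M : ℕ) : ZMod (2*M+4) ≃ ZMod (2*M+4) :=
  Equiv.ofBijective (PiFun M) (Finite.injective_iff_bijective.mp (PiFun_inj M))

lemma PiEquiv_apply (M : ℕ) (e : ZMod (2*M+4)) : PiEquiv M e = PiFun M e := rfl

lemma PiFun_step (M : ℕ) (e : ZMod (2*M+4)) :
    ∃ s : ℕ, (M+1 ≤ s ∧ s ≤ M+3) ∧ PiFun M (e + 1) = PiFun M e + (s : ZMod (2*M+4)) := by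
  haveI : NeZero (2*M+4) := ⟨by omega⟩
  have hv : e = ((e.val : ℕ) : ZMod (2*M+4)) := (ZMod.natCast_zmod_val e).symm
  have hilt : e.val < 2*M+4 := ZMod.val_lt e
  set i := e.val with hidef
  have hz2 : ((2*M+4 : ℕ) : ZMod (2*M+4)) = 0 := ZMod.natCast_self _
  have hPe : PiFun M e = ((pif M i : ℕ) : ZMod (2*M+4)) := rfl
  by_cases hlast : i = 2*M+3
  · -- wrap-around
    have he1 : e + 1 = ((0 : ℕ) : ZMod (2*M+4)) := by
      rw [hv, hlast]
      push_cast
      push_cast at hz2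
      linear_combination hz2
    refine ⟨M+2, ⟨by omega, by omega⟩, ?_⟩
    have hP1 : PiFun M (e+1) = ((pif M 0 : ℕ) : ZMod (2*M+4)) := by
      rw [he1, PiFun]
      norm_num [ZMod.val_cast_of_lt (show 0 < 2*M+4 by omega)]
    rw [hP1, hPe, hlast, pif, pif, if_pos (show 0 < M+2 by omega), if_neg (show ¬ 2*M+3 < M+2 by omega)]
    have : (2*M+3) - (M+2) = M+1 := by omega
    rw [this]
    push_cast
    push_cast at hz2
    linear_combination (-(M : ZMod (2*M+4)) - 2) * hz2
  · have he1 : e + 1 = ((i+1 : ℕ) : ZMod (2*M+4)) := by rw [hv]; push_cast; ring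
    have hP1 : PiFun M (e+1) = ((pif M (i+1) : ℕ) : ZMod (2*M+4)) := by
      rw [he1, PiFun, ZMod.val_cast_of_lt (show i+1 < 2*M+4 by omega)]
    by_cases c1 : i < M+1
    · refine ⟨M+1, ⟨le_refl _, by omega⟩, ?_⟩
      rw [hP1, hPe, pif, pif, if_pos (show i+1 < M+2 by omega), if_pos (show i < M+2 by omega)]
      push_cast; ring
    · by_cases c2 : i = M+1
      · refine ⟨M+2, ⟨by omega, by omega⟩, ?_⟩
        rw [hP1, hPe, c2, pif, pif, if_neg (show ¬ M+1+1 < M+2 by omega), if_pos (show M+1 < M+2 by omega)]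
        have : (M+1+1) - (M+2) = 0 := by omega
        rw [this]
        push_cast; ring
      · -- M+2 ≤ i ≤ 2M+2
        obtain ⟨j, hj⟩ : ∃ j, i = M+2+j := ⟨i - (M+2), by omega⟩
        refine ⟨M+3, ⟨by omega, le_refl _⟩, ?_⟩
        rw [hj] at hP1 hPe
        rw [hP1, hPe, pif, pif, if_neg (show ¬ M+2+j+1 < M+2 by omega), if_neg (show ¬ M+2+j < M+2 by omega)]
        have e1 : (M+2+j+1) - (M+2) = j+1 := by omega
        have e2 : (M+2+j) - (M+2) = j := by omega
        rw [e1, e2]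
        push_cast; ring

lemma constr_even (n M : ℕ) (hn : n = 2*M+4) :
    ∃ σ : ZMod n ≃ ZMod n, ∀ (q : ZMod n) (t : ℕ), 0 < t → t < M+1 →
      σ (q + (t : ZMod n)) ≠ σ q ∧ σ (q + (t : ZMod n)) ≠ σ q + 1 ∧
        σ q ≠ σ (q + (t : ZMod n)) + 1 := by
  subst hn
  refine ⟨(PiEquiv M).symm, ?_⟩
  intro q t ht htM
  have htn : ((t : ℕ) : ZMod (2*M+4)) ≠ 0 := nat_cast_ne_zero (by omega) (by omega)
  refine ⟨?_, ?_, ?_⟩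
  · intro h
    have := (PiEquiv M).symm.injective h
    exact htn (by linear_combination this)
  · intro h
    set a := (PiEquiv M).symm q with ha
    have hq : PiFun M a = q := (PiEquiv M).apply_symm_apply q
    have hq2 : PiFun M (a + 1) = q + (t : ZMod (2*M+4)) := by
      rw [← h]
      exact (PiEquiv M).apply_symm_apply _
    obtain ⟨s, ⟨hs1, hs2⟩, hstep⟩ := PiFun_step M a
    rw [hq2, hq] at hstep
    have : ((t : ℕ) : ZMod (2*M+4)) = ((s : ℕ) : ZMod (2*M+4)) := by linear_combination hstep
    have := nat_cast_inj (by omega) (by omega) this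
    omega
  · intro h
    set a := (PiEquiv M).symm (q + (t : ZMod (2*M+4))) with ha
    have hq : PiFun M a = q + (t : ZMod (2*M+4)) := (PiEquiv M).apply_symm_apply _
    have hq2 : PiFun M (a + 1) = q := by
      rw [← h]
      exact (PiEquiv M).apply_symm_apply _
    obtain ⟨s, ⟨hs1, hs2⟩, hstep⟩ := PiFun_step M a
    rw [hq2, hq] at hstep
    have hst : ((s + t : ℕ) : ZMod (2*M+4)) = 0 := by push_cast; linear_combination -hstep
    exact nat_cast_ne_zero (by omega) (by omega) hst



/-! ### upper bound machinery -/

set_option maxHeartbeats 1000000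

lemma window_card {n : ℕ} [NeZero n] (W : Finset (ZMod n)) (hW : ∀ x ∈ W, x + 1 ∉ W) :
    2 * W.card ≤ n := by
  have hinj : Function.Injective (fun x : ZMod n => x + 1) := add_left_injective 1
  have hdis : Disjoint W (W.image (fun x => x + 1)) := by
    rw [Finset.disjoint_left]
    intro x hx hx'
    obtain ⟨y, hy, hyx⟩ := Finset.mem_image.mp hx'
    exact hW y hy (hyx ▸ hx)
  have hcu := Finset.card_union_of_disjoint hdis
  have hle := Finset.card_le_univ (W ∪ W.image fun x => x + 1)
  rw [hcu, Finset.card_image_of_injective _ hinj] at hle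
  rw [ZMod.card] at hle
  omega

lemma window_flip {n m : ℕ} [NeZero n] (hn : n = 2*m) (W : Finset (ZMod n)) (hcard : W.card = m)
    (hW : ∀ x ∈ W, x + 1 ∉ W) : ∀ x : ZMod n, x + 1 ∈ W ↔ x ∉ W := by
  have hinj : Function.Injective (fun x : ZMod n => x + 1) := add_left_injective 1
  have hdis : Disjoint W (W.image (fun x => x + 1)) := by
    rw [Finset.disjoint_left]
    intro x hx hx'
    obtain ⟨y, hy, hyx⟩ := Finset.mem_image.mp hx'
    exact hW y hy (hyx ▸ hx)
  have huniv : (W ∪ W.image (fun x => x + 1)) = Finset.univ := by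
    apply Finset.eq_univ_of_card
    rw [Finset.card_union_of_disjoint hdis, Finset.card_image_of_injective _ hinj]
    rw [ZMod.card, hcard, hn]
    omega
  intro x
  constructor
  · intro h1 hx
    exact hW x hx h1
  · intro hx
    have hm : (x + 1) ∈ (W ∪ W.image (fun x => x + 1)) := huniv ▸ Finset.mem_univ _
    rcases Finset.mem_union.mp hm with h | h
    · exact h
    · obtain ⟨y, hy, hyx⟩ := Finset.mem_image.mp h
      have hyx2 : y = x := by
        have : y + 1 = x + 1 := hyx
        linear_combination this
      exact absurd (hyx2 ▸ hy) hx

lemma upper_odd (n M : ℕ) (hn : n = 2*M+3) (g : Fin n → ZMod n)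
    (hinj : Function.Injective g)
    (hg : ∀ p q : Fin n, p ≠ q → (p:ℕ) < (q:ℕ) + (M+2) → (q:ℕ) < (p:ℕ) + (M+2) →
      g p ≠ g q + 1) : False := by
  subst hn
  haveI : NeZero (2*M+3) := ⟨by omega⟩
  have hone : (1 : ZMod (2*M+3)) ≠ 0 := by
    have h1 : ((1:ℕ) : ZMod (2*M+3)) ≠ 0 := nat_cast_ne_zero (by omega) (by omega)
    simpa using h1
  have hle : M + 2 ≤ 2*M+3 := by omega
  have winj : Function.Injective (fun t : Fin (M+2) => g (Fin.castLE hle t)) :=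
    fun a b h => Fin.castLE_injective hle (hinj h)
  set W : Finset (ZMod (2*M+3)) :=
    Finset.univ.image (fun t : Fin (M+2) => g (Fin.castLE hle t)) with hW
  have hcard : W.card = M+2 := by
    rw [hW, Finset.card_image_of_injective _ winj, Finset.card_univ, Fintype.card_fin]
  have hprop : ∀ x ∈ W, x + 1 ∉ W := by
    intro x hx hx'
    rw [hW, Finset.mem_image] at hx hx'
    obtain ⟨t, _, ht⟩ := hx
    obtain ⟨t', _, ht'⟩ := hx'
    have hne : Fin.castLE hle t' ≠ Fin.castLE hle t := by
      intro hc
      rw [hc, ht] at ht'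
      exact hone (by linear_combination -ht')
    exact hg _ _ hne (show t'.val < t.val + (M+2) by omega) (show t.val < t'.val + (M+2) by omega)
      (ht'.trans (by rw [ht]))
  have := window_card W hprop
  omega

lemma upper_even (n M : ℕ) (hn : n = 2*M+4) (g : Fin n → ZMod n)
    (hinj : Function.Injective g)
    (hg : ∀ p q : Fin n, p ≠ q → (p:ℕ) < (q:ℕ) + (M+2) → (q:ℕ) < (p:ℕ) + (M+2) →
      g p ≠ g q + 1) : False := by
  subst hn
  haveI : NeZero (2*M+4) := ⟨by omega⟩
  have hone : (1 : ZMod (2*M+4)) ≠ 0 := by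
    have h1 : ((1:ℕ) : ZMod (2*M+4)) ≠ 0 := nat_cast_ne_zero (by omega) (by omega)
    simpa using h1
  have htwo : (2 : ZMod (2*M+4)) ≠ 0 := by
    have h1 : ((2:ℕ) : ZMod (2*M+4)) ≠ 0 := nat_cast_ne_zero (by omega) (by omega)
    simpa using h1
  have hAinj : Function.Injective (fun t : Fin (M+2) => g (⟨t.val, by omega⟩ : Fin (2*M+4))) := by
    intro a b h
    have h2 : (a : ℕ) = (b : ℕ) := congrArg (Fin.val : Fin (2*M+4) → ℕ) (hinj h)
    exact Fin.ext h2
  have hBinj : Function.Injective (fun t : Fin (M+2) => g (⟨t.val+1, by omega⟩ : Fin (2*M+4))) := by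
    intro a b h
    have h2 : (a : ℕ) + 1 = (b : ℕ) + 1 := congrArg (Fin.val : Fin (2*M+4) → ℕ) (hinj h)
    exact Fin.ext (by omega)
  set A : Finset (ZMod (2*M+4)) :=
    Finset.univ.image (fun t : Fin (M+2) => g (⟨t.val, by omega⟩ : Fin (2*M+4))) with hA
  set B : Finset (ZMod (2*M+4)) :=
    Finset.univ.image (fun t : Fin (M+2) => g (⟨t.val+1, by omega⟩ : Fin (2*M+4))) with hB
  have hcardA : A.card = M+2 := by
    rw [hA, Finset.card_image_of_injective _ hAinj, Finset.card_univ, Fintype.card_fin]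
  have hcardB : B.card = M+2 := by
    rw [hB, Finset.card_image_of_injective _ hBinj, Finset.card_univ, Fintype.card_fin]
  have hpropA : ∀ x ∈ A, x + 1 ∉ A := by
    intro x hx hx'
    rw [hA, Finset.mem_image] at hx hx'
    obtain ⟨t, _, ht⟩ := hx
    obtain ⟨t', _, ht'⟩ := hx'
    have hne : (⟨t'.val, by omega⟩ : Fin (2*M+4)) ≠ ⟨t.val, by omega⟩ := by
      intro hc
      rw [hc, ht] at ht'
      exact hone (by linear_combination -ht')
    exact hg _ _ hne (show t'.val < t.val + (M+2) by omega) (show t.val < t'.val + (M+2) by omega)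
      (ht'.trans (by rw [ht]))
  have hpropB : ∀ x ∈ B, x + 1 ∉ B := by
    intro x hx hx'
    rw [hB, Finset.mem_image] at hx hx'
    obtain ⟨t, _, ht⟩ := hx
    obtain ⟨t', _, ht'⟩ := hx'
    have hne : (⟨t'.val+1, by omega⟩ : Fin (2*M+4)) ≠ ⟨t.val+1, by omega⟩ := by
      intro hc
      rw [hc, ht] at ht'
      exact hone (by linear_combination -ht')
    exact hg _ _ hne (show t'.val+1 < t.val+1 + (M+2) by omega)
      (show t.val+1 < t'.val+1 + (M+2) by omega) (ht'.trans (by rw [ht]))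
  have flipA := window_flip (m := M+2) (by ring) A hcardA hpropA
  have flipB := window_flip (m := M+2) (by ring) B hcardB hpropB
  set g0 := g ⟨0, by omega⟩ with hg0
  set gm := g ⟨M+2, by omega⟩ with hgm
  have hg0A : g0 ∈ A := by
    rw [hA, Finset.mem_image]
    exact ⟨⟨0, by omega⟩, Finset.mem_univ _, rfl⟩
  have hgmB : gm ∈ B := by
    rw [hB, Finset.mem_image]
    exact ⟨⟨M+1, by omega⟩, Finset.mem_univ _, rfl⟩
  have hg0B : g0 ∉ B := by
    rw [hB, Finset.mem_image]
    rintro ⟨t, _, ht⟩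
    have h2 : (t : ℕ) + 1 = 0 := congrArg (Fin.val : Fin (2*M+4) → ℕ) (hinj ht)
    omega
  have hgmA : gm ∉ A := by
    rw [hA, Finset.mem_image]
    rintro ⟨t, _, ht⟩
    have h2 : (t : ℕ) = M + 2 := congrArg (Fin.val : Fin (2*M+4) → ℕ) (hinj ht)
    omega
  have st1 : g0 + 1 ∈ B := (flipB g0).mpr hg0B
  have st1' : g0 + 1 ∉ A := fun h => ((flipA g0).mp h) hg0A
  have st2 : g0 + 1 = gm := by
    rw [hB, Finset.mem_image] at st1
    obtain ⟨t, _, ht⟩ := st1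
    by_cases hc : t.val + 1 < M + 2
    · exact absurd (by
        rw [hA, Finset.mem_image]
        exact ⟨⟨t.val+1, hc⟩, Finset.mem_univ _, ht⟩) st1'
    · rw [← ht, hgm]
      congr 1
      exact Fin.ext (show t.val + 1 = M+2 by omega)
  have st3 : gm + 1 ∈ A := (flipA gm).mpr hgmA
  have st3' : gm + 1 ∉ B := fun h => ((flipB gm).mp h) hgmB
  have st4 : gm + 1 = g0 := by
    rw [hA, Finset.mem_image] at st3
    obtain ⟨t, _, ht⟩ := st3
    by_cases hc : 1 ≤ t.val
    · refine absurd (?_ : gm + 1 ∈ B) st3'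
      rw [hB, Finset.mem_image]
      refine ⟨⟨t.val-1, by omega⟩, Finset.mem_univ _, ?_⟩
      show g ⟨t.val-1+1, by omega⟩ = gm + 1
      rw [← ht]
      congr 1
      exact Fin.ext (show t.val-1+1 = t.val by omega)
    · rw [← ht, hg0]
      congr 1
      exact Fin.ext (show t.val = 0 by omega)
  exact htwo (by linear_combination st2 + st4)



/-! ### bridging and assembly -/

lemma cyclicGood_mono {V : Type*} (G : SimpleGraph V) {N : ℕ} (f : ZMod N ≃ G.edgeSet)
    {d d' : ℕ} (h : CyclicGood G f d) (hd : d' ≤ d) : CyclicGood G f d' :=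
  fun i j k hj hk hne => h i j k (lt_of_lt_of_le hj hd) (lt_of_lt_of_le hk hd) hne

lemma cyclicGood_transport {V : Type*} (G : SimpleGraph V) {m n : ℕ} (h : m = n)
    (f : ZMod n ≃ G.edgeSet) (d : ℕ) (hf : CyclicGood G f d) :
    CyclicGood G ((Equiv.cast (congrArg ZMod h)).trans f) d := by
  subst h
  intro i j k hj hk hne
  exact hf i j k hj hk hne

lemma cyclic_window (k d : ℕ) (f : ZMod (k+3) ≃ (SimpleGraph.cycleGraph (k+3)).edgeSet)
    (h : CyclicGood (SimpleGraph.cycleGraph (k+3)) f d) :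
    ∀ x y : ZMod (k+3), x ≠ y → x.val < y.val + d → y.val < x.val + d →
      edgesDisjoint (f x : Sym2 (Fin (k+3))) (f y : Sym2 (Fin (k+3))) := by
  haveI : NeZero (k+3) := ⟨by omega⟩
  suffices hs : ∀ x y : ZMod (k+3), y.val < x.val → x.val < y.val + d →
      edgesDisjoint (f x : Sym2 (Fin (k+3))) (f y : Sym2 (Fin (k+3))) by
    intro x y hne h1 h2
    rcases lt_trichotomy x.val y.val with hlt | heq | hgt
    · exact edgesDisjoint_symm (hs y x hlt h2)
    · exact absurd (ZMod.val_injective _ heq) hne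
    · exact hs x y hgt h1
  intro x y hlt h1
  have h0d : 0 < d := by omega
  have hxy : x = y + ((x.val - y.val : ℕ) : ZMod (k+3)) := by
    calc x = ((x.val : ℕ) : ZMod (k+3)) := (ZMod.natCast_zmod_val x).symm
      _ = ((y.val + (x.val - y.val) : ℕ) : ZMod (k+3)) := by congr 1; omega
      _ = y + ((x.val - y.val : ℕ) : ZMod (k+3)) := by rw [Nat.cast_add, ZMod.natCast_zmod_val]
  have hh := h y (x.val - y.val) 0 (by omega) h0d (by omega)
  simp only [Nat.cast_zero, add_zero] at hh
  rw [← hxy] at hh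
  exact hh

lemma g_upper (k : ℕ) (g : Fin (k+3) → ZMod (k+3)) (hinj : Function.Injective g)
    (hg : ∀ p q : Fin (k+3), p ≠ q → (p:ℕ) < (q:ℕ) + ((k+2)/2+1) → (q:ℕ) < (p:ℕ) + ((k+2)/2+1) →
      g p ≠ g q + 1) : False := by
  rcases Nat.even_or_odd k with ⟨M, hM⟩ | ⟨M, hM⟩
  · have hD : (k+2)/2 + 1 = M + 2 := by omega
    rw [hD] at hg
    exact upper_odd (k+3) M (by omega) g hinj hg
  · have hD : (k+2)/2 + 1 = M + 2 := by omega
    rw [hD] at hg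
    exact upper_even (k+3) M (by omega) g hinj hg

lemma window_to_g (k : ℕ) (f : Fin (k+3) ≃ (SimpleGraph.cycleGraph (k+3)).edgeSet)
    (hw : ∀ x y : Fin (k+3), x ≠ y → (x:ℕ) < (y:ℕ) + ((k+2)/2+1) → (y:ℕ) < (x:ℕ) + ((k+2)/2+1) →
      edgesDisjoint (f x : Sym2 (Fin (k+3))) (f y : Sym2 (Fin (k+3)))) : False := by
  set g : Fin (k+3) → ZMod (k+3) := fun p => (E k).symm (f p) with hgdef
  have hinj : Function.Injective g := by
    intro a b h
    exact f.injective ((E k).symm.injective h)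
  apply g_upper k g hinj
  intro p q hne h1 h2 heq
  have hdisj := hw p q hne h1 h2
  have hfp : (f p : Sym2 (Fin (k+3))) = edg k (g p) := by
    have h3 : E k (g p) = f p := (E k).apply_symm_apply (f p)
    rw [← h3, E_apply]
  have hfq : (f q : Sym2 (Fin (k+3))) = edg k (g q) := by
    have h3 : E k (g q) = f q := (E k).apply_symm_apply (f q)
    rw [← h3, E_apply]
  rw [hfp, hfq] at hdisj
  exact ((edg_disjoint_iff k _ _).mp hdisj).2.1 heq

lemma constr (k : ℕ) :
    ∃ σ : ZMod (k+3) ≃ ZMod (k+3), ∀ (q : ZMod (k+3)) (t : ℕ), 0 < t → t < (k+2)/2 →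
      σ (q + (t : ZMod (k+3))) ≠ σ q ∧ σ (q + (t : ZMod (k+3))) ≠ σ q + 1 ∧
        σ q ≠ σ (q + (t : ZMod (k+3))) + 1 := by
  rcases Nat.even_or_odd k with ⟨M, hM⟩ | ⟨M, hM⟩
  · obtain ⟨σ, hσ⟩ := constr_odd (k+3) M (by omega)
    exact ⟨σ, fun q t ht htd => hσ q t ht (by omega)⟩
  · obtain ⟨σ, hσ⟩ := constr_even (k+3) M (by omega)
    exact ⟨σ, fun q t ht htd => hσ q t ht (by omega)⟩

lemma cyclicGood_constr (k : ℕ) :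
    ∃ f : ZMod (k+3) ≃ (SimpleGraph.cycleGraph (k+3)).edgeSet,
      CyclicGood (SimpleGraph.cycleGraph (k+3)) f ((k+2)/2) := by
  haveI : NeZero (k+3) := ⟨by omega⟩
  obtain ⟨σ, hσ⟩ := constr k
  refine ⟨σ.trans (E k), ?_⟩
  suffices hs : ∀ (i : ZMod (k+3)) (j t : ℕ), t < j → j < (k+2)/2 →
      edgesDisjoint ((σ.trans (E k)) (i + (j : ZMod (k+3))) : Sym2 (Fin (k+3)))
        ((σ.trans (E k)) (i + (t : ZMod (k+3))) : Sym2 (Fin (k+3))) by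
    intro i j t hj ht hne
    rcases Nat.lt_or_ge j t with hlt | hge
    · exact edgesDisjoint_symm (hs i t j hlt ht)
    · exact hs i j t (by omega) hj
  intro i j t hlt hj
  have hq : i + (j : ZMod (k+3)) = (i + (t : ZMod (k+3))) + ((j - t : ℕ) : ZMod (k+3)) := by
    have h5 : (j : ZMod (k+3)) = (t : ZMod (k+3)) + (((j - t : ℕ) : ℕ) : ZMod (k+3)) := by
      rw [← Nat.cast_add]
      congr 1
      omega
    rw [h5]
    ring
  obtain ⟨hd1, hd2, hd3⟩ := hσ (i + (t : ZMod (k+3))) (j - t) (by omega) (by omega)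
  rw [hq]
  show edgesDisjoint (edg k (σ (_ + _))) (edg k (σ _))
  rw [edg_disjoint_iff]
  exact ⟨hd1, hd2, hd3⟩


lemma linearGood_constr (k : ℕ) :
    ∃ f : Fin (edgeCount (SimpleGraph.cycleGraph (k+3))) ≃ (SimpleGraph.cycleGraph (k+3)).edgeSet,
      LinearGood (SimpleGraph.cycleGraph (k+3)) f ((k+2)/2) := by
  obtain ⟨f0, hf0⟩ := cyclicGood_constr k
  have hw := cyclic_window k ((k+2)/2) f0 hf0
  have hc := edgeCount_cycle k
  refine ⟨(finCongr hc).trans (show Fin (k+3) ≃ _ from f0), ?_⟩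
  intro j t hne h1 h2
  exact hw (finCongr hc j) (finCongr hc t)
    (fun hcontr => hne ((finCongr hc).injective hcontr)) h1 h2

lemma linear_upper (k d : ℕ) (hd : (k+2)/2 < d)
    (f : Fin (edgeCount (SimpleGraph.cycleGraph (k+3))) ≃ (SimpleGraph.cycleGraph (k+3)).edgeSet)
    (hf : LinearGood (SimpleGraph.cycleGraph (k+3)) f d) : False := by
  have hc := edgeCount_cycle k
  apply window_to_g k ((finCongr hc.symm).trans f)
  intro x y hne h1 h2
  exact hf (finCongr hc.symm x) (finCongr hc.symm y)
    (fun hcn => hne ((finCongr hc.symm).injective hcn))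
    (show (x:ℕ) < (y:ℕ) + d by omega) (show (y:ℕ) < (x:ℕ) + d by omega)

lemma cyclic_upper (k d : ℕ) (hd : (k+2)/2 < d)
    (f : ZMod (edgeCount (SimpleGraph.cycleGraph (k+3))) ≃ (SimpleGraph.cycleGraph (k+3)).edgeSet)
    (hf : CyclicGood (SimpleGraph.cycleGraph (k+3)) f d) : False := by
  have hc := edgeCount_cycle k
  have hf2 := cyclicGood_transport (SimpleGraph.cycleGraph (k+3)) hc.symm f d hf
  have hf3 := cyclicGood_mono (SimpleGraph.cycleGraph (k+3)) _ hf2 (show (k+2)/2+1 ≤ d by omega)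
  have hw := cyclic_window k ((k+2)/2+1) _ hf3
  apply window_to_g k
    (show Fin (k+3) ≃ _ from (Equiv.cast (congrArg ZMod hc.symm)).trans f)
  intro x y hne h1 h2
  exact hw x y (fun hcn => hne hcn) h1 h2

end CMS

/-- For every integer `n ≥ 3`,
`cms (C_n) = ms (C_n) = ⌊(n-1)/2⌋`. -/
theorem cms_ms_cycleGraph (n : ℕ) (hn : 3 ≤ n) :
    cms (SimpleGraph.cycleGraph n) = (n - 1) / 2 ∧
    ms (SimpleGraph.cycleGraph n) = (n - 1) / 2 := by
  obtain ⟨k, rfl⟩ : ∃ k, n = k + 3 := ⟨n - 3, by omega⟩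
  have hres : (k + 3 - 1) / 2 = (k+2)/2 := by omega
  rw [hres]
  constructor
  · simp only [cms]
    have hmem : ((k+2)/2) ∈ {d : ℕ | ∃ f : ZMod (edgeCount (SimpleGraph.cycleGraph (k+3))) ≃
        (SimpleGraph.cycleGraph (k+3)).edgeSet, CyclicGood (SimpleGraph.cycleGraph (k+3)) f d} := by
      obtain ⟨f0, hf0⟩ := CMS.cyclicGood_constr k
      exact ⟨_, CMS.cyclicGood_transport _ (CMS.edgeCount_cycle k) f0 _ hf0⟩
    have hub : ∀ d ∈ {d : ℕ | ∃ f : ZMod (edgeCount (SimpleGraph.cycleGraph (k+3))) ≃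
        (SimpleGraph.cycleGraph (k+3)).edgeSet, CyclicGood (SimpleGraph.cycleGraph (k+3)) f d},
        d ≤ (k+2)/2 := by
      intro d hd
      by_contra hgt
      push_neg at hgt
      obtain ⟨f, hf⟩ := hd
      exact CMS.cyclic_upper k d hgt f hf
    exact le_antisymm (csSup_le ⟨_, hmem⟩ hub) (le_csSup ⟨(k+2)/2, hub⟩ hmem)
  · simp only [ms]
    have hmem : ((k+2)/2) ∈ {d : ℕ | d ≤ edgeCount (SimpleGraph.cycleGraph (k+3)) ∧
        ∃ f : Fin (edgeCount (SimpleGraph.cycleGraph (k+3))) ≃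
        (SimpleGraph.cycleGraph (k+3)).edgeSet, LinearGood (SimpleGraph.cycleGraph (k+3)) f d} := by
      refine ⟨by rw [CMS.edgeCount_cycle]; omega, ?_⟩
      exact CMS.linearGood_constr k
    have hub : ∀ d ∈ {d : ℕ | d ≤ edgeCount (SimpleGraph.cycleGraph (k+3)) ∧
        ∃ f : Fin (edgeCount (SimpleGraph.cycleGraph (k+3))) ≃
        (SimpleGraph.cycleGraph (k+3)).edgeSet, LinearGood (SimpleGraph.cycleGraph (k+3)) f d},
        d ≤ (k+2)/2 := by
      intro d hd
      by_contra hgt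
      push_neg at hgt
      obtain ⟨-, f, hf⟩ := hd
      exact CMS.linear_upper k d hgt f hf
    exact le_antisymm (csSup_le ⟨_, hmem⟩ hub) (le_csSup ⟨(k+2)/2, hub⟩ hmem)
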